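/- In JH_∞, let R and S be two disjoint segments in the tree T such that R is a p–q segment and S is a p–r segment with p ≤ q ≤ r. Then ‖f_R − f_S‖_{JH_∞*} ≤ 5/3. -/
import Mathlib


open Metric

/-- A segment in the tree `T` of finite sequences of naturals: a finite subset totally
ordered under the prefix (extension) order. -/
def SegL (S : Finset (List ℕ)) : Prop :=
  ∀ s ∈ S, ∀ t ∈ S, s <+: t ∨ t <+: s

/-- An `n–m` segment: a nonempty segment whose least element has level (length) `n` and
whose greatest element has level `m`. -/
def IsNMSeg (S : Finset (List ℕ)) (n m : ℕ) : Prop :=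
  SegL S ∧ (∀ t ∈ S, n ≤ t.length ∧ t.length ≤ m) ∧
    (∃ t ∈ S, t.length = n) ∧ (∃ t ∈ S, t.length = m)

/-- An admissible family of segments: pairwise disjoint `n–m` segments for a common pair
`n ≤ m`. -/
def AdmissibleL (F : Finset (Finset (List ℕ))) : Prop :=
  ∃ n m : ℕ, n ≤ m ∧ (∀ S ∈ F, IsNMSeg S n m) ∧
    ∀ S ∈ F, ∀ S' ∈ F, S ≠ S' → Disjoint S S'

/-- The `JH_∞` norm of a finitely supported function on `T`. -/
noncomputable def jhInfNorm (x : (List ℕ) →₀ ℝ) : ℝ :=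
  sSup {r : ℝ | ∃ F : Finset (Finset (List ℕ)), AdmissibleL F ∧
    r = ∑ S ∈ F, |∑ t ∈ S, x t|}

lemma mem_le_foldr_max {a : ℕ} : ∀ {l : List ℕ}, a ∈ l → a ≤ l.foldr max 0 := by
  intro l hl
  induction l with
  | nil => simp at hl
  | cons h t ih =>
    rcases List.mem_cons.mp hl with rfl | h'
    · exact le_max_left _ _
    · exact le_trans (ih h') (le_max_right _ _)

lemma jhSet_bddAbove (x : (List ℕ) →₀ ℝ) :
    BddAbove {r : ℝ | ∃ F : Finset (Finset (List ℕ)), AdmissibleL F ∧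
      r = ∑ S ∈ F, |∑ t ∈ S, x t|} := by
  refine ⟨∑ t ∈ x.support, |x t|, ?_⟩
  rintro v ⟨F, ⟨n, m, hnm, hmem, hdisj⟩, rfl⟩
  calc ∑ A ∈ F, |∑ t ∈ A, x t| ≤ ∑ A ∈ F, ∑ t ∈ A, |x t| := by
        exact Finset.sum_le_sum fun A _ => Finset.abs_sum_le_sum_abs _ _
    _ = ∑ t ∈ F.biUnion id, |x t| := by
        exact (Finset.sum_biUnion
          (fun A hA B hB hAB => hdisj A hA B hB hAB)).symm
    _ = ∑ t ∈ (F.biUnion id) ∩ x.support, |x t| := by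
        refine (Finset.sum_subset Finset.inter_subset_left ?_).symm
        intro t ht htn
        have : t ∉ x.support := fun hs => htn (Finset.mem_inter.mpr ⟨ht, hs⟩)
        simp [Finsupp.notMem_support_iff.mp this]
    _ ≤ ∑ t ∈ x.support, |x t| := by
        refine Finset.sum_le_sum_of_subset_of_nonneg Finset.inter_subset_right ?_
        intro t _ _; exact abs_nonneg _

lemma zero_le_jhInfNorm (x : (List ℕ) →₀ ℝ) : 0 ≤ jhInfNorm x := by
  refine le_csSup (jhSet_bddAbove x) ?_
  exact ⟨∅, ⟨0, 0, le_refl 0, by simp, by simp⟩, by simp⟩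

lemma key (R S : Finset (List ℕ)) (p q r : ℕ) (hpq : p ≤ q) (hqr : q ≤ r)
    (hR : IsNMSeg R p q) (hS : IsNMSeg S p r) (hdisj : Disjoint R S)
    (x : (List ℕ) →₀ ℝ) :
    |(∑ t ∈ R, x t) - ∑ t ∈ S, x t| ≤ jhInfNorm x := by
  obtain ⟨hRseg, hRlev, ⟨r0, hr0R, hr0len⟩, ⟨tR, htRR, htRlen⟩⟩ := hR
  obtain ⟨hSseg, hSlev, ⟨s0, hs0S, hs0len⟩, hSr⟩ := hS
  set b : ℕ := (x.support.sup fun l => l.foldr max 0) + 1 with hb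
  set w : ℕ → List ℕ := fun k => tR ++ List.replicate k b with hw
  -- basic facts
  have hwlen : ∀ k, (w k).length = q + k := by
    intro k; simp [hw, htRlen]
  have hbig : ∀ l ∈ x.support, ∀ a ∈ l, a < b := by
    intro l hl a ha
    have h1 : a ≤ l.foldr max 0 := mem_le_foldr_max ha
    have h2 : l.foldr max 0 ≤ x.support.sup fun l => l.foldr max 0 :=
      Finset.le_sup hl
    omega
  have hwnsupp : ∀ k, 1 ≤ k → w k ∉ x.support := by
    intro k hk hmem
    have hbmem : b ∈ w k := by
      simp only [hw, List.mem_append]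
      right
      exact List.mem_replicate.mpr ⟨by omega, rfl⟩
    exact absurd (hbig _ hmem b hbmem) (lt_irrefl b)
  have hRpref : ∀ a ∈ R, a <+: tR := by
    intro a ha
    rcases hRseg a ha tR htRR with h | h
    · exact h
    · have h1 : tR.length ≤ a.length := h.length_le
      have h2 : a.length ≤ q := (hRlev a ha).2
      have : tR = a := h.eq_of_length (by omega)
      exact this ▸ List.prefix_refl a
  have hwpref : ∀ j k, j ≤ k → w j <+: w k := by
    intro j k hjk
    refine ⟨List.replicate (k - j) b, ?_⟩
    simp [hw, List.append_assoc, ← List.replicate_add]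
    omega
  have htop : ∀ a ∈ R ∪ (Finset.Icc 1 (r - q)).image w, a <+: w (r - q) := by
    intro a ha
    rcases Finset.mem_union.mp ha with h | h
    · exact (hRpref a h).trans ((List.prefix_append tR _) : tR <+: w (r - q))
    · obtain ⟨k, hk, rfl⟩ := Finset.mem_image.mp h
      exact hwpref k (r - q) (Finset.mem_Icc.mp hk).2
  have hwnotS : ∀ k, w k ∉ S := by
    intro k hkS
    have hcmp := hSseg s0 hs0S (w k) hkS
    have hs0pref : s0 <+: w k := by
      rcases hcmp with h | h
      · exact h
      · have h1 : (w k).length ≤ s0.length := h.length_le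
        rw [hwlen, hs0len] at h1
        have : w k = s0 := h.eq_of_length (by rw [hwlen, hs0len]; omega)
        exact this ▸ List.prefix_refl _
    have hr0pref : r0 <+: w k :=
      (hRpref r0 hr0R).trans (List.prefix_append tR _)
    have : r0 = s0 := by
      have := List.prefix_of_prefix_length_le hr0pref hs0pref
        (by rw [hr0len, hs0len])
      exact this.eq_of_length (by rw [hr0len, hs0len])
    exact (Finset.disjoint_left.mp hdisj hr0R) (this ▸ hs0S)
  set P : Finset (List ℕ) := (Finset.Icc 1 (r - q)).image w with hP
  set R' : Finset (List ℕ) := R ∪ P with hR'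
  have hRPdisj : Disjoint R P := by
    rw [Finset.disjoint_right]
    intro a haP haR
    obtain ⟨k, hk, rfl⟩ := Finset.mem_image.mp haP
    have h1 : (w k).length ≤ q := (hRlev _ haR).2
    rw [hwlen] at h1
    have := (Finset.mem_Icc.mp hk).1
    omega
  have hsumR' : ∑ t ∈ R', x t = ∑ t ∈ R, x t := by
    rw [hR', Finset.sum_union hRPdisj]
    have : ∑ t ∈ P, x t = 0 := by
      refine Finset.sum_eq_zero ?_
      intro a haP
      obtain ⟨k, hk, rfl⟩ := Finset.mem_image.mp haP
      exact Finsupp.notMem_support_iff.mp (hwnsupp k (Finset.mem_Icc.mp hk).1)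
    rw [this, add_zero]
  have hR'S : Disjoint R' S := by
    rw [Finset.disjoint_left]
    intro a ha
    rcases Finset.mem_union.mp ha with h | h
    · exact Finset.disjoint_left.mp hdisj h
    · obtain ⟨k, _, rfl⟩ := Finset.mem_image.mp h
      exact hwnotS k
  have hR'seg : SegL R' := by
    intro a ha a' ha'
    exact List.prefix_or_prefix_of_prefix (htop a ha) (htop a' ha')
  have hR'nm : IsNMSeg R' p r := by
    refine ⟨hR'seg, ?_, ⟨r0, Finset.mem_union_left _ hr0R, hr0len⟩, ?_⟩
    · intro t ht
      rcases Finset.mem_union.mp ht with h | h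
      · exact ⟨(hRlev t h).1, le_trans (hRlev t h).2 hqr⟩
      · obtain ⟨k, hk, rfl⟩ := Finset.mem_image.mp h
        rw [hwlen]
        have := Finset.mem_Icc.mp hk
        omega
    · refine ⟨w (r - q), ?_, by rw [hwlen]; omega⟩
      rcases Nat.eq_zero_or_pos (r - q) with h0 | h0
      · have : w (r - q) = tR := by rw [h0]; simp [hw]
        rw [this]; exact Finset.mem_union_left _ htRR
      · refine Finset.mem_union_right _ ?_
        exact Finset.mem_image.mpr ⟨r - q, Finset.mem_Icc.mpr ⟨h0, le_refl _⟩, rfl⟩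
  have hSnm : IsNMSeg S p r := ⟨hSseg, hSlev, ⟨s0, hs0S, hs0len⟩, hSr⟩
  have hne : R' ≠ S := by
    intro h
    have : r0 ∈ S := h ▸ Finset.mem_union_left _ hr0R
    exact Finset.disjoint_left.mp hR'S (Finset.mem_union_left _ hr0R) this
  have hadm : AdmissibleL {R', S} := by
    refine ⟨p, r, le_trans hpq hqr, ?_, ?_⟩
    · intro A hA
      rcases Finset.mem_insert.mp hA with rfl | hA
      · exact hR'nm
      · rw [Finset.mem_singleton.mp hA]; exact hSnm
    · intro A hA B hB hAB
      rcases Finset.mem_insert.mp hA with rfl | hA <;>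
        rcases Finset.mem_insert.mp hB with rfl | hB
      · exact absurd rfl hAB
      · rw [Finset.mem_singleton.mp hB]; exact hR'S
      · rw [Finset.mem_singleton.mp hA]; exact hR'S.symm
      · rw [Finset.mem_singleton.mp hA, Finset.mem_singleton.mp hB] at hAB ⊢
        exact absurd rfl hAB
  have hmem : |∑ t ∈ R', x t| + |∑ t ∈ S, x t| ∈
      {r : ℝ | ∃ F : Finset (Finset (List ℕ)), AdmissibleL F ∧
        r = ∑ S ∈ F, |∑ t ∈ S, x t|} :=
    ⟨{R', S}, hadm, (Finset.sum_pair (f := fun A => |∑ t ∈ A, x t|) hne).symm⟩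
  have hle : |∑ t ∈ R', x t| + |∑ t ∈ S, x t| ≤ jhInfNorm x :=
    le_csSup (jhSet_bddAbove x) hmem
  rw [hsumR'] at hle
  calc |(∑ t ∈ R, x t) - ∑ t ∈ S, x t|
      ≤ |∑ t ∈ R, x t| + |∑ t ∈ S, x t| := abs_sub _ _
    _ ≤ jhInfNorm x := hle

/-- In `JH_∞`, if `R` and `S` are disjoint segments with `R` a `p–q`
segment and `S` a `p–r` segment, `p ≤ q ≤ r`, then `‖f_R - f_S‖ ≤ 5/3`. -/
theorem stmt9 (X : Type*) [NormedAddCommGroup X] [NormedSpace ℝ X] [CompleteSpace X]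
    (e : List ℕ → X)
    (hnorm : ∀ x : (List ℕ) →₀ ℝ, ‖∑ t ∈ x.support, x t • e t‖ = jhInfNorm x)
    (hdense : Dense (Submodule.span ℝ (Set.range e) : Set X))
    (fS : Finset (List ℕ) → (X →L[ℝ] ℝ))
    (hfS : ∀ S : Finset (List ℕ), SegL S → ∀ t : List ℕ,
      fS S (e t) = if t ∈ S then 1 else 0)
    (R S : Finset (List ℕ)) (p q r : ℕ) (hpq : p ≤ q) (hqr : q ≤ r)
    (hR : IsNMSeg R p q) (hS : IsNMSeg S p r) (hdisj : Disjoint R S) :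
    ‖fS R - fS S‖ ≤ 5 / 3 := by
  refine ContinuousLinearMap.opNorm_le_bound _ (by norm_num) ?_
  have hsub : (Submodule.span ℝ (Set.range e) : Set X) ⊆
      {y : X | ‖(fS R - fS S) y‖ ≤ 5 / 3 * ‖y‖} := by
    intro y hy
    obtain ⟨c, hc⟩ := Finsupp.mem_span_range_iff_exists_finsupp.mp hy
    have hy' : y = ∑ t ∈ c.support, c t • e t := by
      rw [← hc]; rfl
    have hsum : ∀ (A : Finset (List ℕ)), SegL A →
        fS A y = ∑ t ∈ A, c t := by
      intro A hA
      rw [hy', map_sum]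
      have : ∀ t ∈ c.support, fS A (c t • e t) = if t ∈ A then c t else 0 := by
        intro t _
        rw [map_smul, hfS A hA, smul_eq_mul]
        split <;> simp
      rw [Finset.sum_congr rfl this, Finset.sum_ite_mem]
      refine Finset.sum_subset Finset.inter_subset_right ?_
      intro t htA htn
      by_cases hts : t ∈ c.support
      · exact absurd (Finset.mem_inter.mpr ⟨hts, htA⟩) htn
      · exact Finsupp.notMem_support_iff.mp hts
    have hny : ‖y‖ = jhInfNorm c := by rw [hy']; exact hnorm c
    have hval : ‖(fS R - fS S) y‖ ≤ jhInfNorm c := by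
      rw [ContinuousLinearMap.sub_apply, hsum R hR.1, hsum S hS.1,
        Real.norm_eq_abs]
      exact key R S p q r hpq hqr hR hS hdisj c
    have h1 : (1 : ℝ) * ‖y‖ ≤ 5 / 3 * ‖y‖ := by
      have := norm_nonneg y
      nlinarith
    simp only [Set.mem_setOf_eq]
    calc ‖(fS R - fS S) y‖ ≤ jhInfNorm c := hval
      _ = ‖y‖ := hny.symm
      _ = 1 * ‖y‖ := (one_mul _).symm
      _ ≤ 5 / 3 * ‖y‖ := h1
  have hclosed : IsClosed {y : X | ‖(fS R - fS S) y‖ ≤ 5 / 3 * ‖y‖} :=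
    isClosed_le ((fS R - fS S).continuous.norm)
      (continuous_const.mul continuous_norm)
  intro y
  have hy : y ∈ closure (Submodule.span ℝ (Set.range e) : Set X) := by
    rw [hdense.closure_eq]; trivial
  exact closure_minimal hsub hclosed hy
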